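/- Let p be a prime and f ≥ 1 an integer. Let K be a field equipped with a nonarchimedean additive valuation v : K → ℝ ∪ {+∞} (v(xy) = v(x) + v(y), v(x+y) ≥ min(v(x), v(y)), v(x) = +∞ iff x = 0) normalized by v(p) = 1. Let a, x ∈ K with v(a) ≥ 0, v(x) ≥ 0, v(a) ≥ 1 − 1/p^f, and v(x^{p^f} − a·x) ≥ 1. Then v(x) ≥ 1/p^f. -/

import Mathlib

/-- Second branch of the case analysis: if the additive valuation (values in
`ℝ ∪ {+∞}`, modeled as `WithTop ℝ`, normalized by `v p = 1`) satisfies `v a ≥ 0`,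
`v x ≥ 0`, `v a ≥ 1 − 1/p^f` and `v (x^{p^f} − a·x) ≥ 1`, then `v x ≥ 1/p^f`. -/
theorem valuation_lower_bound_large_hasse
    (p f : ℕ) (hp : p.Prime) (hf : 1 ≤ f)
    (K : Type*) [Field K]
    (v : K → WithTop ℝ)
    (hv_mul : ∀ x y : K, v (x * y) = v x + v y)
    (hv_add : ∀ x y : K, min (v x) (v y) ≤ v (x + y))
    (hv_top : ∀ x : K, v x = ⊤ ↔ x = 0)
    (hv_p : v (p : K) = ((1 : ℝ) : WithTop ℝ))
    (a x : K)
    (ha0 : 0 ≤ v a) (hx0 : 0 ≤ v x)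
    (ha : (((1 - 1 / (p : ℝ) ^ f) : ℝ) : WithTop ℝ) ≤ v a)
    (hx : ((1 : ℝ) : WithTop ℝ) ≤ v (x ^ p ^ f - a * x)) :
    (((1 / (p : ℝ) ^ f) : ℝ) : WithTop ℝ) ≤ v x := by
  by_cases hxz : x = 0
  · rw [hxz, (hv_top 0).mpr rfl]; exact le_top
  have hvx_ne : v x ≠ ⊤ := fun h => hxz ((hv_top x).mp h)
  obtain ⟨t, ht⟩ := WithTop.ne_top_iff_exists.mp hvx_ne
  set q : ℝ := (p : ℝ) ^ f with hq
  have hp2 : (2:ℝ) ≤ (p:ℝ) := by exact_mod_cast hp.two_le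
  have hq2 : (2 : ℝ) ≤ q := by
    calc (2:ℝ) = 2 ^ 1 := (pow_one 2).symm
    _ ≤ (p:ℝ) ^ 1 := pow_le_pow_left₀ (by norm_num) hp2 1
    _ ≤ (p:ℝ) ^ f := pow_le_pow_right₀ (by linarith) hf
  have hqpos : (0:ℝ) < q := by linarith
  by_contra hcon
  push_neg at hcon
  rw [← ht] at hcon hx0
  have htlt : t < 1 / q := by exact_mod_cast hcon
  have ht0 : (0:ℝ) ≤ t := by exact_mod_cast hx0
  -- v 1 = 0
  have hv1 : v 1 = 0 := by
    have h1ne : v 1 ≠ ⊤ := fun h => one_ne_zero ((hv_top 1).mp h)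
    obtain ⟨r, hr⟩ := WithTop.ne_top_iff_exists.mp h1ne
    have := hv_mul 1 1
    rw [mul_one, ← hr] at this
    have : r = r + r := by exact_mod_cast this
    have : r = 0 := by linarith
    rw [← hr, this]; rfl
  -- v (x ^ n) = n * t
  have hpow : ∀ n : ℕ, v (x ^ n) = (((n : ℝ) * t : ℝ) : WithTop ℝ) := by
    intro n
    induction n with
    | zero => simpa using hv1
    | succ n ih =>
      rw [pow_succ, hv_mul, ih, ← ht, ← WithTop.coe_add]
      congr 1
      push_cast
      ring
  -- key real inequality: q * t < 1 - 1/q + t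
  have hkey : q * t < 1 - 1/q + t := by
    have h1 : (q - 1) * t < (q - 1) * (1/q) :=
      mul_lt_mul_of_pos_left htlt (by linarith)
    have h2 : (q - 1) * (1/q) = 1 - 1/q := by field_simp
    nlinarith
  -- v (a * x) > q * t
  have hax : ((q * t : ℝ) : WithTop ℝ) < v (a * x) := by
    rw [hv_mul, ← ht]
    calc ((q * t : ℝ) : WithTop ℝ) < ((1 - 1/q + t : ℝ) : WithTop ℝ) := by
          exact_mod_cast hkey
      _ = ((1 - 1/q : ℝ) : WithTop ℝ) + (t : WithTop ℝ) := by
          rw [← WithTop.coe_add]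
      _ ≤ v a + (t : WithTop ℝ) := add_le_add ha le_rfl
  -- v (x ^ p ^ f - a * x) > q * t  (since q*t < 1 ≤ it)
  have hqt1 : q * t < 1 := by nlinarith
  have hdiff : ((q * t : ℝ) : WithTop ℝ) < v (x ^ p ^ f - a * x) :=
    lt_of_lt_of_le (by exact_mod_cast hqt1) hx
  -- but v (x ^ p^f) = q * t and x^{p^f} = diff + a*x
  have hmin := hv_add (x ^ p ^ f - a * x) (a * x)
  rw [sub_add_cancel, hpow (p ^ f)] at hmin
  have hcast : ((p ^ f : ℕ) : ℝ) = q := by push_cast [hq]; ring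
  rw [hcast] at hmin
  have := lt_of_lt_of_le (lt_min hdiff hax) hmin
  exact absurd this (lt_irrefl _)
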